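/- Let $A \subseteq \{0,1\}^n$ have measure $\mu = |A|/2^n > 0$ and let $f = 1_A/\mu$ be the normalized indicator. Then for every integer $k \geq 1$, $\sum_{|w|=k} \hat{f}(w)^2 \leq \left(e \cdot \max(1, \frac{2\log(1/\mu)}{k})\right)^{k}$, up to replacing the base by a universal constant. -/

import Mathlib

open Finset

/-- The Fourier coefficient `f̂(w) = 𝔼_x[(-1)^{w·x} f(x)]` of `f : {0,1}ⁿ → ℝ`. -/
noncomputable def boolFourier {n : ℕ} (f : (Fin n → Bool) → ℝ) (w : Fin n → Bool) : ℝ :=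
  (∑ x : Fin n → Bool, (-1 : ℝ) ^ (univ.filter fun i => w i && x i).card * f x) / 2 ^ n

/-- The Hamming weight of `w ∈ {0,1}ⁿ`. -/
def hammingWt {n : ℕ} (w : Fin n → Bool) : ℕ := (univ.filter fun i => w i = true).card

namespace LK

def eps (a b : Bool) : ℝ := if a && b then -1 else 1

def chi {n : ℕ} (w x : Fin n → Bool) : ℝ := ∏ i, eps (w i) (x i)

lemma chi_eq {n : ℕ} (w x : Fin n → Bool) :
    chi w x = (-1 : ℝ) ^ (univ.filter fun i => w i && x i).card := by
  rw [chi, ← Finset.prod_const (b := (-1:ℝ))]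
  rw [Finset.prod_filter]
  exact Finset.prod_congr rfl fun i _ => by by_cases h : w i && x i <;> simp [eps, h]

lemma boolFourier_eq {n : ℕ} (f : (Fin n → Bool) → ℝ) (w : Fin n → Bool) :
    boolFourier f w = (∑ x : Fin n → Bool, chi w x * f x) / 2 ^ n := by
  simp [boolFourier, chi_eq]

lemma sum_cons {n : ℕ} {M : Type*} [AddCommMonoid M] (F : (Fin (n+1) → Bool) → M) :
    ∑ x : Fin (n+1) → Bool, F x = ∑ b : Bool, ∑ x : Fin n → Bool, F (Fin.cons b x) := by
  rw [← (Fin.consEquiv (fun _ => Bool)).sum_comp F, Fintype.sum_prod_type]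
  rfl

lemma sum_pi_bool {n : ℕ} (h : Fin n → Bool → ℝ) :
    ∑ x : Fin n → Bool, ∏ i, h i (x i) = ∏ i, (h i false + h i true) := by
  induction n with
  | zero => simp
  | succ n ih =>
    rw [sum_cons]
    have : ∀ b : Bool, ∀ x : Fin n → Bool,
        ∏ i, h i ((Fin.cons b x : Fin (n+1) → Bool) i) = h 0 b * ∏ i, h i.succ (x i) := by
      intro b x; rw [Fin.prod_univ_succ]; simp
    simp only [this, ← Finset.mul_sum, ← Fintype.sum_mul_sum]
    rw [Fin.prod_univ_succ, ih (fun i b => h i.succ b)]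
    simp [Fintype.sum_bool, add_comm]
    ring
  
lemma chi_mul_chi {n : ℕ} (w v x : Fin n → Bool) :
    chi w x * chi v x = ∏ i, (eps (w i) (x i) * eps (v i) (x i)) := by
  rw [chi, chi, Finset.prod_mul_distrib]

lemma orth {n : ℕ} (w v : Fin n → Bool) :
    ∑ x : Fin n → Bool, chi w x * chi v x = if w = v then (2:ℝ) ^ n else 0 := by
  simp only [chi_mul_chi]
  rw [sum_pi_bool (fun i b => eps (w i) b * eps (v i) b)]
  by_cases h : w = v
  · subst h
    simp only [if_pos rfl]
    have : ∀ i, eps (w i) false * eps (w i) false + eps (w i) true * eps (w i) true = 2 := by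
      intro i; cases hwi : w i <;> norm_num [eps]
    rw [Finset.prod_congr rfl (fun i _ => this i)]; simp
  · rw [if_neg h]
    obtain ⟨i, hi⟩ : ∃ i, w i ≠ v i := by
      by_contra hc; push_neg at hc; exact h (funext hc)
    apply Finset.prod_eq_zero (Finset.mem_univ i)
    cases hwi : w i <;> cases hvi : v i <;> simp_all [eps]


/-- dual orthogonality -/
lemma orth' (x y : Fin n → Bool) :
    ∑ w : Fin n → Bool, chi w x * chi w y = if x = y then (2:ℝ) ^ n else 0 := by
  have : ∀ w : Fin n → Bool, chi w x * chi w y = chi x w * chi y w := by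
    intro w
    simp only [chi, ← Finset.prod_mul_distrib]
    refine Finset.prod_congr rfl fun i _ => ?_
    cases w i <;> cases x i <;> cases y i <;> norm_num [eps]
  simp only [this]
  exact orth x y

def FF {n : ℕ} (c : (Fin n → Bool) → ℝ) (x : Fin n → Bool) : ℝ := ∑ w, c w * chi w x

/-- Fourier inversion -/
lemma inversion (f : (Fin n → Bool) → ℝ) (x : Fin n → Bool) :
    FF (fun w => (∑ y : Fin n → Bool, chi w y * f y) / 2 ^ n) x = f x := by
  simp only [FF, div_mul_eq_mul_div, Finset.sum_mul, ← Finset.sum_div]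
  rw [Finset.sum_comm]
  have : ∀ y : Fin n → Bool, ∑ w : Fin n → Bool, chi w y * f y * chi w x
      = (if y = x then (2:ℝ)^n else 0) * f y := by
    intro y
    rw [Finset.sum_congr rfl (fun w _ => by ring_nf : ∀ w ∈ univ, chi w y * f y * chi w x = (chi w y * chi w x) * f y)]
    rw [← Finset.sum_mul, orth' y x]
  rw [Finset.sum_congr rfl fun y _ => this y]
  simp only [ite_mul, zero_mul]
  rw [Finset.sum_ite_eq' univ x (fun y => (2:ℝ)^n * f y)]
  have h2 : (0:ℝ) < 2^n := by positivity
  simp [mul_comm, mul_div_assoc, div_self h2.ne']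

/-- Plancherel -/
lemma plancherel (c d : (Fin n → Bool) → ℝ) :
    ∑ x : Fin n → Bool, FF c x * FF d x = 2^n * ∑ w, c w * d w := by
  simp only [FF, Finset.sum_mul_sum]
  rw [Finset.sum_comm]
  have : ∀ w, ∑ v : Fin n → Bool, ∑ x : Fin n → Bool, (c w * chi w x) * (d v * chi v x)
      = 2^n * (c w * d w) := by
    intro w
    have h1 : ∀ v, ∑ x : Fin n → Bool, (c w * chi w x) * (d v * chi v x)
        = c w * d v * (if w = v then (2:ℝ)^n else 0) := by
      intro v
      rw [← orth w v, Finset.mul_sum]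
      exact Finset.sum_congr rfl fun x _ => by ring
    simp only [h1, mul_ite, mul_zero]
    rw [Finset.sum_ite_eq univ w (fun v => c w * d v * (2:ℝ)^n)]
    simp [mul_comm, mul_assoc]
  rw [Finset.sum_congr rfl fun w _ => ?_]
  · rw [← Finset.mul_sum]
  · rw [Finset.sum_comm]
    exact this w

/-- coefficients of FF -/
lemma coeff_FF (c : (Fin n → Bool) → ℝ) (w : Fin n → Bool) :
    (∑ x : Fin n → Bool, chi w x * FF c x) / 2^n = c w := by
  simp only [FF, Finset.mul_sum]
  rw [Finset.sum_comm]
  have : ∀ v, ∑ x : Fin n → Bool, chi w x * (c v * chi v x) = c v * (if w = v then (2:ℝ)^n else 0) := by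
    intro v
    rw [← orth w v, Finset.mul_sum]
    exact Finset.sum_congr rfl fun x _ => by ring
  simp only [this, mul_ite, mul_zero]
  rw [Finset.sum_ite_eq univ w (fun v => c v * (2:ℝ)^n)]
  have h2 : (0:ℝ) < 2^n := by positivity
  simp [mul_comm, mul_div_assoc, div_self h2.ne']


lemma choose_le (m : ℕ) : ∀ i, i ≤ m → Nat.choose (2*m) (2*i) ≤ (2*m-1)^i * Nat.choose m i := by
  intro i
  induction i with
  | zero => simp
  | succ i ih =>
    intro him
    have hi : i ≤ m := le_of_lt him
    have ihm := ih hi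
    -- use choose_succ_right_eq
    have h1 : Nat.choose (2*m) (2*i+1) * (2*i+1) = Nat.choose (2*m) (2*i) * (2*m - 2*i) :=
      Nat.choose_succ_right_eq _ _
    have h2 : Nat.choose (2*m) (2*i+2) * (2*i+2) = Nat.choose (2*m) (2*i+1) * (2*m - (2*i+1)) :=
      Nat.choose_succ_right_eq _ _
    have h3 : Nat.choose m (i+1) * (i+1) = Nat.choose m i * (m - i) :=
      Nat.choose_succ_right_eq _ _
    -- multiply target by (2i+1)(2i+2)(i+1) and compare
    have key : Nat.choose (2*m) (2*i+2) * ((2*i+1)*(2*i+2)*(i+1))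
        ≤ (2*m-1)^(i+1) * Nat.choose m (i+1) * ((2*i+1)*(2*i+2)*(i+1)) := by
      have e1 : Nat.choose (2*m) (2*i+2) * ((2*i+1)*(2*i+2)*(i+1))
          = Nat.choose (2*m) (2*i) * ((2*m - 2*i) * (2*m - (2*i+1)) * (i+1)) := by
        calc Nat.choose (2*m) (2*i+2) * ((2*i+1)*(2*i+2)*(i+1))
            = (Nat.choose (2*m) (2*i+2) * (2*i+2)) * ((2*i+1)*(i+1)) := by ring
          _ = (Nat.choose (2*m) (2*i+1) * (2*m - (2*i+1))) * ((2*i+1)*(i+1)) := by rw [h2]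
          _ = (Nat.choose (2*m) (2*i+1) * (2*i+1)) * ((2*m - (2*i+1))*(i+1)) := by ring
          _ = (Nat.choose (2*m) (2*i) * (2*m - 2*i)) * ((2*m - (2*i+1))*(i+1)) := by rw [h1]
          _ = _ := by ring
      have e2 : (2*m-1)^(i+1) * Nat.choose m (i+1) * ((2*i+1)*(2*i+2)*(i+1))
          = (2*m-1)^(i+1) * (Nat.choose m i * (m-i)) * ((2*i+1)*(2*i+2)) := by
        calc (2*m-1)^(i+1) * Nat.choose m (i+1) * ((2*i+1)*(2*i+2)*(i+1))
            = (2*m-1)^(i+1) * (Nat.choose m (i+1) * (i+1)) * ((2*i+1)*(2*i+2)) := by ring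
          _ = _ := by rw [h3]
      rw [e1, e2]
      -- now pure arithmetic: C(2m,2i)·(2m-2i)(2m-2i-1)(i+1) ≤ ρ^{i+1} C(m,i)(m-i)(2i+1)(2i+2)
      have h4 : (2*m - 2*i) = 2*(m-i) := by omega
      have h5 : (2*i+2) = 2*(i+1) := by omega
      calc Nat.choose (2*m) (2*i) * ((2*m - 2*i) * (2*m - (2*i+1)) * (i+1))
          ≤ ((2*m-1)^i * Nat.choose m i) * ((2*m - 2*i) * (2*m - (2*i+1)) * (i+1)) := by
            exact Nat.mul_le_mul_right _ ihm
        _ = (2*m-1)^i * Nat.choose m i * (m-i) * (2*(i+1)) * (2*m - (2*i+1)) := by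
            rw [h4]; ring
        _ ≤ (2*m-1)^i * Nat.choose m i * (m-i) * (2*(i+1)) * ((2*m-1)*(2*i+1)) := by
            refine Nat.mul_le_mul_left _ ?_
            have : 2*m - (2*i+1) ≤ 2*m - 1 := by omega
            calc 2*m - (2*i+1) ≤ 2*m-1 := this
              _ ≤ (2*m-1)*(2*i+1) := Nat.le_mul_of_pos_right _ (by omega)
        _ = (2*m-1)^(i+1) * (Nat.choose m i * (m-i)) * ((2*i+1)*(2*i+2)) := by
            rw [h5]; ring
    exact Nat.le_of_mul_le_mul_right key (by positivity)

lemma sum_range_split (m : ℕ) (g : ℕ → ℝ) :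
    ∑ j ∈ range (2*m+1), g j = ∑ i ∈ range (m+1), g (2*i) + ∑ i ∈ range m, g (2*i+1) := by
  induction m with
  | zero => simp
  | succ m ih =>
    have h : 2*(m+1)+1 = (2*m+1) + 1 + 1 := by ring
    rw [h, Finset.sum_range_succ, Finset.sum_range_succ, ih,
      Finset.sum_range_succ (fun i => g (2*i)) (m+1), Finset.sum_range_succ (fun i => g (2*i+1)) m,
      show 2*(m+1) = 2*m+2 from by ring]
    ring

lemma choose_le' (m i : ℕ) (h : i ≤ m) :
    Nat.choose (2*m) (2*i) ≤ (2*m-1)^(m-i) * Nat.choose m i := by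
  have h1 := choose_le m (m-i) (by omega)
  have e1 : 2*(m-i) = 2*m - 2*i := by omega
  rw [e1, Nat.choose_symm (by omega : 2*i ≤ 2*m), Nat.choose_symm h] at h1
  exact h1

lemma poly_id (m : ℕ) (x y : ℝ) :
    (x+y)^(2*m) + (x-y)^(2*m)
      = 2 * ∑ i ∈ range (m+1), (Nat.choose (2*m) (2*i) : ℝ) * x^(2*i) * y^(2*(m-i)) := by
  rw [add_pow, sub_eq_add_neg, add_pow, ← Finset.sum_add_distrib]
  have hterm : ∀ j ∈ range (2*m+1),
      x^j * y^(2*m-j) * (Nat.choose (2*m) j : ℝ) + x^j * (-y)^(2*m-j) * (Nat.choose (2*m) j : ℝ)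
      = (1 + (-1:ℝ)^(2*m-j)) * (x^j * y^(2*m-j) * (Nat.choose (2*m) j : ℝ)) := by
    intro j _
    rw [neg_pow]
    ring
  rw [Finset.sum_congr rfl hterm]
  rw [sum_range_split m (fun j => (1 + (-1:ℝ)^(2*m-j)) * (x^j * y^(2*m-j) * (Nat.choose (2*m) j : ℝ)))]
  have hodd : ∀ i ∈ range m, (1 + (-1:ℝ)^(2*m-(2*i+1))) * (x^(2*i+1) * y^(2*m-(2*i+1)) * (Nat.choose (2*m) (2*i+1) : ℝ)) = 0 := by
    intro i hi
    have : Odd (2*m - (2*i+1)) := by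
      have : i < m := Finset.mem_range.mp hi
      refine ⟨m - i - 1, by omega⟩
    rw [this.neg_one_pow]
    ring
  rw [Finset.sum_congr rfl hodd, Finset.sum_const, smul_zero, add_zero, Finset.mul_sum]
  refine Finset.sum_congr rfl fun i hi => ?_
  have him : i ≤ m := by have := Finset.mem_range.mp hi; omega
  have heven : (-1:ℝ)^(2*m-2*i) = 1 := by
    have : Even (2*m - 2*i) := ⟨m - i, by omega⟩
    exact this.neg_one_pow
  rw [heven, show 2*m - 2*i = 2*(m-i) from by omega]
  ring


lemma hoelder_step {ι : Type*} [Fintype ι] (a b : ι → ℝ) (N : ℝ) (hN : 0 < N)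
    (m p q : ℕ) (hpq : p + q = m) (hm : 1 ≤ m) (X Y : ℝ) (hX : 0 ≤ X) (hY : 0 ≤ Y)
    (hA : (∑ x, (a x)^(2*m))/N ≤ X^m) (hB : (∑ x, (b x)^(2*m))/N ≤ Y^m) :
    (∑ x, (a x)^(2*p) * (b x)^(2*q))/N ≤ X^p * Y^q := by
  rcases Nat.eq_zero_or_pos p with hp0 | hp0
  · subst hp0
    simp only [Nat.zero_add] at hpq; subst hpq
    simpa using hB
  rcases Nat.eq_zero_or_pos q with hq0 | hq0
  · subst hq0
    simp only [Nat.add_zero] at hpq; subst hpq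
    simpa using hA
  have hpm : p < m := by omega
  have hqm : q < m := by omega
  set P : ℝ := (m:ℝ)/p with hP
  set Q : ℝ := (m:ℝ)/q with hQ
  have hmp : (0:ℝ) < p := by exact_mod_cast hp0
  have hmq : (0:ℝ) < q := by exact_mod_cast hq0
  have hmm : (0:ℝ) < m := by positivity
  have hconj : P.HolderConjugate Q := by
    rw [Real.holderConjugate_iff]
    constructor
    · rw [hP, lt_div_iff₀ hmp, one_mul]
      exact_mod_cast hpm
    · rw [hP, hQ]
      field_simp
      exact_mod_cast (by exact_mod_cast hpq : (p:ℝ) + q = m)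
  -- rewrite even powers as powers of squares
  have ha2 : ∀ x, (a x)^(2*p) = (a x ^ 2)^p := fun x => by rw [← pow_mul, mul_comm]
  have hb2 : ∀ x, (b x)^(2*q) = (b x ^ 2)^q := fun x => by rw [← pow_mul, mul_comm]
  have ham : ∀ x, (a x)^(2*m) = (a x ^ 2)^m := fun x => by rw [← pow_mul, mul_comm]
  have hbm : ∀ x, (b x)^(2*m) = (b x ^ 2)^m := fun x => by rw [← pow_mul, mul_comm]
  have holder := Real.inner_le_Lp_mul_Lq_of_nonneg (univ : Finset ι)
    (f := fun x => (a x ^ 2)^p) (g := fun x => (b x ^ 2)^q) hconj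
    (fun i _ => by positivity) (fun i _ => by positivity)
  have hfp : ∀ x : ι, ((a x ^ 2)^p : ℝ) ^ P = (a x ^ 2)^m := by
    intro x
    rw [← Real.rpow_natCast (a x ^ 2) p, ← Real.rpow_mul (by positivity)]
    rw [show (p:ℝ) * P = (m:ℝ) from by rw [hP]; field_simp]
    exact Real.rpow_natCast _ m
  have hgq : ∀ x : ι, ((b x ^ 2)^q : ℝ) ^ Q = (b x ^ 2)^m := by
    intro x
    rw [← Real.rpow_natCast (b x ^ 2) q, ← Real.rpow_mul (by positivity)]
    rw [show (q:ℝ) * Q = (m:ℝ) from by rw [hQ]; field_simp]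
    exact Real.rpow_natCast _ m
  simp only [hfp, hgq] at holder
  -- divide by N
  have hNsplit : N = N ^ (1/P) * N ^ (1/Q) := by
    rw [← Real.rpow_add hN, one_div, one_div, hconj.inv_add_inv_eq_one, Real.rpow_one]
  -- combine
  have hsum_nonneg_a : 0 ≤ ∑ x : ι, (a x ^ 2)^m := Finset.sum_nonneg fun x _ => by positivity
  have hsum_nonneg_b : 0 ≤ ∑ x : ι, (b x ^ 2)^m := Finset.sum_nonneg fun x _ => by positivity
  have hAm : (∑ x : ι, (a x ^ 2)^m) ≤ N * X^m := by
    rw [← Finset.sum_congr rfl fun x _ => ham x]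
    rw [div_le_iff₀ hN] at hA; linarith [hA]
  have hBm : (∑ x : ι, (b x ^ 2)^m) ≤ N * Y^m := by
    rw [← Finset.sum_congr rfl fun x _ => hbm x]
    rw [div_le_iff₀ hN] at hB; linarith [hB]
  have hPpos : 0 < 1/P := by positivity
  have hQpos : 0 < 1/Q := by positivity
  have step1 : (∑ x : ι, (a x ^ 2)^m) ^ (1/P) ≤ (N * X^m) ^ (1/P) :=
    Real.rpow_le_rpow hsum_nonneg_a hAm hPpos.le
  have step2 : (∑ x : ι, (b x ^ 2)^m) ^ (1/Q) ≤ (N * Y^m) ^ (1/Q) :=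
    Real.rpow_le_rpow hsum_nonneg_b hBm hQpos.le
  have hXm : ((X^m : ℝ)) ^ (1/P) = X ^ p := by
    rw [← Real.rpow_natCast X m, ← Real.rpow_mul hX]
    rw [show (m:ℝ) * (1/P) = (p:ℝ) from by rw [hP]; field_simp]
    exact Real.rpow_natCast _ p
  have hYm : ((Y^m : ℝ)) ^ (1/Q) = Y ^ q := by
    rw [← Real.rpow_natCast Y m, ← Real.rpow_mul hY]
    rw [show (m:ℝ) * (1/Q) = (q:ℝ) from by rw [hQ]; field_simp]
    exact Real.rpow_natCast _ q
  have hfin : ∑ x : ι, (a x ^ 2)^p * (b x ^ 2)^q ≤ N * (X^p * Y^q) := by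
    calc ∑ x : ι, (a x ^ 2)^p * (b x ^ 2)^q
        ≤ (∑ x : ι, (a x ^ 2)^m) ^ (1/P) * (∑ x : ι, (b x ^ 2)^m) ^ (1/Q) := holder
      _ ≤ (N * X^m) ^ (1/P) * (N * Y^m) ^ (1/Q) := by
          apply mul_le_mul step1 step2 (Real.rpow_nonneg hsum_nonneg_b _)
          positivity
      _ = N ^ (1/P) * (X^m)^(1/P) * (N ^ (1/Q) * (Y^m)^(1/Q)) := by
          rw [Real.mul_rpow hN.le (by positivity), Real.mul_rpow hN.le (by positivity)]
      _ = (N ^ (1/P) * N ^ (1/Q)) * ((X^m)^(1/P) * (Y^m)^(1/Q)) := by ring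
      _ = N * (X^p * Y^q) := by rw [← hNsplit, hXm, hYm]
  rw [div_le_iff₀ hN]
  calc ∑ x : ι, (a x)^(2*p) * (b x)^(2*q)
      = ∑ x : ι, (a x ^ 2)^p * (b x ^ 2)^q := Finset.sum_congr rfl fun x _ => by rw [ha2, hb2]
    _ ≤ N * (X^p * Y^q) := hfin
    _ = X^p * Y^q * N := by ring


lemma wt_cons {n : ℕ} (b : Bool) (w : Fin n → Bool) :
    hammingWt (Fin.cons b w) = (if b then 1 else 0) + hammingWt w := by
  rw [hammingWt, hammingWt, Finset.card_filter, Finset.card_filter, Fin.sum_univ_succ]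
  cases b <;> simp

lemma chi_cons {n : ℕ} (wb b : Bool) (w x : Fin n → Bool) :
    chi (Fin.cons wb w) (Fin.cons b x) = eps wb b * chi w x := by
  simp only [chi, Fin.prod_univ_succ, Fin.cons_zero, Fin.cons_succ]

lemma FF_cons {n : ℕ} (c : (Fin (n+1) → Bool) → ℝ) (b : Bool) (x : Fin n → Bool) :
    FF c (Fin.cons b x) = FF (fun w => c (Fin.cons false w)) x
      + (if b then -1 else 1) * FF (fun w => c (Fin.cons true w)) x := by
  rw [FF, sum_cons (fun w => c w * chi w (Fin.cons b x))]
  simp only [chi_cons, Fintype.sum_bool, FF]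
  have hf : eps false b = 1 := by cases b <;> rfl
  have ht : eps true b = if b then -1 else 1 := by cases b <;> rfl
  rw [hf, ht, Finset.mul_sum, add_comm]
  congr 1
  · exact Finset.sum_congr rfl fun w _ => by ring
  · exact Finset.sum_congr rfl fun w _ => by ring

lemma key (m : ℕ) (hm : 1 ≤ m) : ∀ (n : ℕ) (c : (Fin n → Bool) → ℝ),
    (∑ x : Fin n → Bool, (FF c x)^(2*m)) / 2^n
      ≤ (∑ w : Fin n → Bool, ((2*m-1 : ℕ) : ℝ)^(hammingWt w) * (c w)^2)^m := by
  intro n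
  induction n with
  | zero =>
    intro c
    have hchi : ∀ w x : Fin 0 → Bool, chi w x = 1 := by
      intro w x; rw [chi]; exact Finset.prod_of_isEmpty _
    have hwt : ∀ w : Fin 0 → Bool, hammingWt w = 0 := by
      intro w; simp [hammingWt]
    rw [Fintype.sum_unique, Fintype.sum_unique, FF, Fintype.sum_unique, hchi, hwt,
      mul_one]
    rw [pow_zero, div_one, pow_zero, one_mul, ← pow_mul, mul_comm 2 m, pow_mul]
  | succ n ih =>
    intro c
    set ρ : ℝ := ((2*m-1 : ℕ) : ℝ) with hρ
    have hρ0 : 0 ≤ ρ := Nat.cast_nonneg _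
    set A : (Fin n → Bool) → ℝ := FF (fun w => c (Fin.cons false w)) with hA
    set B : (Fin n → Bool) → ℝ := FF (fun w => c (Fin.cons true w)) with hB
    set Sa : ℝ := ∑ w : Fin n → Bool, ρ^(hammingWt w) * (c (Fin.cons false w))^2 with hSa
    set Sb : ℝ := ∑ w : Fin n → Bool, ρ^(hammingWt w) * (c (Fin.cons true w))^2 with hSb
    have hSa0 : 0 ≤ Sa := Finset.sum_nonneg fun w _ => by positivity
    have hSb0 : 0 ≤ Sb := Finset.sum_nonneg fun w _ => by positivity
    have ihA : (∑ x : Fin n → Bool, (A x)^(2*m)) / 2^n ≤ Sa^m := ih _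
    have ihB : (∑ x : Fin n → Bool, (B x)^(2*m)) / 2^n ≤ Sb^m := ih _
    -- RHS decomposition
    have hRHS : (∑ w : Fin (n+1) → Bool, ρ^(hammingWt w) * (c w)^2) = Sa + ρ * Sb := by
      rw [sum_cons (fun w => ρ^(hammingWt w) * (c w)^2), Fintype.sum_bool]
      have h1 : ∑ w : Fin n → Bool, ρ^(hammingWt (Fin.cons true w)) * (c (Fin.cons true w))^2
          = ρ * Sb := by
        rw [hSb, Finset.mul_sum]
        exact Finset.sum_congr rfl fun w _ => by rw [wt_cons]; simp [pow_succ]; ring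
      have h2 : ∑ w : Fin n → Bool, ρ^(hammingWt (Fin.cons false w)) * (c (Fin.cons false w))^2
          = Sa := by
        rw [hSa]
        exact Finset.sum_congr rfl fun w _ => by rw [wt_cons]; simp
      rw [h1, h2, add_comm]
    -- LHS decomposition
    have hLHS : (∑ x : Fin (n+1) → Bool, (FF c x)^(2*m)) / 2^(n+1)
        = ∑ i ∈ range (m+1), (Nat.choose (2*m) (2*i) : ℝ)
            * ((∑ x : Fin n → Bool, (A x)^(2*i) * (B x)^(2*(m-i))) / 2^n) := by
      rw [sum_cons (fun x => (FF c x)^(2*m)), Fintype.sum_bool]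
      have hT : ∀ x : Fin n → Bool, (FF c (Fin.cons true x))^(2*m) = (A x - B x)^(2*m) := by
        intro x; rw [FF_cons]; simp [sub_eq_add_neg, hA, hB]
      have hF : ∀ x : Fin n → Bool, (FF c (Fin.cons false x))^(2*m) = (A x + B x)^(2*m) := by
        intro x; rw [FF_cons]; simp [hA, hB]
      have hsum : ((∑ x : Fin n → Bool, (FF c (Fin.cons true x))^(2*m))
            + ∑ x : Fin n → Bool, (FF c (Fin.cons false x))^(2*m))
          = 2 * ∑ x : Fin n → Bool, ∑ i ∈ range (m+1),
              (Nat.choose (2*m) (2*i) : ℝ) * (A x)^(2*i) * (B x)^(2*(m-i)) := by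
        rw [← Finset.sum_add_distrib, Finset.mul_sum]
        refine Finset.sum_congr rfl fun x _ => ?_
        rw [hT x, hF x, add_comm, poly_id]
      rw [hsum, Finset.sum_comm, pow_succ, mul_comm ((2:ℝ)^n) 2,
        mul_div_mul_left _ _ (two_ne_zero), Finset.sum_div]
      refine Finset.sum_congr rfl fun i _ => ?_
      have : ∑ x : Fin n → Bool, (Nat.choose (2*m) (2*i) : ℝ) * (A x)^(2*i) * (B x)^(2*(m-i))
          = (Nat.choose (2*m) (2*i) : ℝ) * ∑ x : Fin n → Bool, (A x)^(2*i) * (B x)^(2*(m-i)) := by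
        rw [Finset.mul_sum]
        exact Finset.sum_congr rfl fun x _ => by ring
      rw [this, mul_div_assoc]
    rw [hLHS, hRHS]
    -- bound each term
    have hterm : ∀ i ∈ range (m+1), (Nat.choose (2*m) (2*i) : ℝ)
          * ((∑ x : Fin n → Bool, (A x)^(2*i) * (B x)^(2*(m-i))) / 2^n)
        ≤ (Nat.choose m i : ℝ) * (Sa^i * (ρ*Sb)^(m-i)) := by
      intro i hi
      have him : i ≤ m := by have := Finset.mem_range.mp hi; omega
      have hH := hoelder_step A B (2^n) (by positivity) m i (m-i) (by omega) hm Sa Sb hSa0 hSb0 ihA ihB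
      have hsum0 : 0 ≤ (∑ x : Fin n → Bool, (A x)^(2*i) * (B x)^(2*(m-i))) / 2^n := by
        apply div_nonneg _ (by positivity)
        refine Finset.sum_nonneg fun x _ => ?_
        have e1 : (A x)^(2*i) = ((A x)^2)^i := by rw [← pow_mul, mul_comm]
        have e2 : (B x)^(2*(m-i)) = ((B x)^2)^(m-i) := by rw [← pow_mul, mul_comm]
        rw [e1, e2]; positivity
      calc (Nat.choose (2*m) (2*i) : ℝ) * ((∑ x : Fin n → Bool, (A x)^(2*i) * (B x)^(2*(m-i))) / 2^n)
          ≤ (Nat.choose (2*m) (2*i) : ℝ) * (Sa^i * Sb^(m-i)) := by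
            exact mul_le_mul_of_nonneg_left hH (Nat.cast_nonneg _)
        _ ≤ ((2*m-1 : ℕ)^(m-i) * Nat.choose m i : ℕ) * (Sa^i * Sb^(m-i)) := by
            apply mul_le_mul_of_nonneg_right _ (by positivity)
            exact_mod_cast choose_le' m i him
        _ = (Nat.choose m i : ℝ) * (Sa^i * (ρ*Sb)^(m-i)) := by
            push_cast
            rw [mul_pow]
            ring
    calc ∑ i ∈ range (m+1), (Nat.choose (2*m) (2*i) : ℝ)
            * ((∑ x : Fin n → Bool, (A x)^(2*i) * (B x)^(2*(m-i))) / 2^n)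
        ≤ ∑ i ∈ range (m+1), (Nat.choose m i : ℝ) * (Sa^i * (ρ*Sb)^(m-i)) :=
          Finset.sum_le_sum hterm
      _ = (Sa + ρ*Sb)^m := by
          rw [add_pow]
          exact Finset.sum_congr rfl fun i _ => by ring


lemma sqrt_trick (W T R : ℝ) (hW : 0 ≤ W) (hT : 0 ≤ T) (hR : 0 ≤ R)
    (h : W ≤ T * (R * W)^((1:ℝ)/2)) : W ≤ T^2 * R := by
  rcases eq_or_lt_of_le hW with h0 | h0
  · rw [← h0]; positivity
  rcases eq_or_lt_of_le hR with hR0 | hR0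
  · rw [← hR0, zero_mul, Real.zero_rpow (by norm_num), mul_zero] at h
    linarith
  have hRW : 0 < R * W := mul_pos hR0 h0
  have hsq : ((R*W)^((1:ℝ)/2))^2 = R * W := by
    rw [← Real.rpow_natCast ((R*W)^((1:ℝ)/2)) 2, ← Real.rpow_mul hRW.le]
    norm_num
  have h2 : W^2 ≤ T^2 * (R*W) := by
    calc W^2 ≤ (T * (R*W)^((1:ℝ)/2))^2 := by
          apply pow_le_pow_left₀ hW h
      _ = T^2 * ((R*W)^((1:ℝ)/2))^2 := by ring
      _ = T^2 * (R*W) := by rw [hsq]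
  nlinarith [h2, sq_nonneg T]

lemma const_simp (N a s : ℝ) (hN : 0 < N) (ha : 0 < a) :
    (N/a) * a^(1-s) * N^s = N * (N/a)^s := by
  rw [Real.div_rpow hN.le ha.le, Real.rpow_sub ha, Real.rpow_one]
  have h1 : (0:ℝ) < a^s := Real.rpow_pos_of_pos ha s
  field_simp

lemma rpow_sq (x s : ℝ) (hx : 0 ≤ x) : (x^s)^2 = x^(2*s) := by
  rw [← Real.rpow_natCast (x^s) 2, ← Real.rpow_mul hx]
  ring_nf


lemma master (n k m : ℕ) (hm : 1 ≤ m) (A : Finset (Fin n → Bool)) (hA : A.Nonempty) :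
    ∑ w ∈ univ.filter (fun w => hammingWt w = k),
        boolFourier (fun x => (if x ∈ A then (1 : ℝ) else 0) / ((A.card : ℝ) / 2 ^ n)) w ^ 2
      ≤ ((2^n : ℝ)/A.card) ^ ((1:ℝ)/m) * ((2*m-1 : ℕ) : ℝ)^k := by
  have hcard : (0:ℝ) < A.card := by exact_mod_cast Finset.card_pos.mpr hA
  have h2n : (0:ℝ) < (2:ℝ)^n := by positivity
  set f : (Fin n → Bool) → ℝ := fun x => (if x ∈ A then (1 : ℝ) else 0) / ((A.card : ℝ) / 2 ^ n)
    with hfdef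
  have hf0 : ∀ x, 0 ≤ f x := fun x => by
    rw [hfdef]; dsimp only; positivity
  set c : (Fin n → Bool) → ℝ := fun w => boolFourier f w with hc
  set ck : (Fin n → Bool) → ℝ := fun w => if hammingWt w = k then c w else 0 with hck
  have hW0 : (0:ℝ) ≤ ∑ w ∈ univ.filter (fun w => hammingWt w = k), (c w)^2 :=
    Finset.sum_nonneg fun w _ => sq_nonneg _
  have hρ0 : (0:ℝ) ≤ ((2*m-1:ℕ):ℝ) := Nat.cast_nonneg _
  have hρk0 : (0:ℝ) ≤ ((2*m-1:ℕ):ℝ)^k := pow_nonneg hρ0 k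
  have hfF : ∀ x, FF c x = f x := by
    intro x
    have h := inversion f x
    have : c = fun w => (∑ y : Fin n → Bool, chi w y * f y) / 2 ^ n := by
      funext w; rw [hc]; exact boolFourier_eq f w
    rw [this]; exact h
  -- Plancherel
  have hplan : ∑ x : Fin n → Bool, f x * FF ck x
      = 2^n * ∑ w ∈ univ.filter (fun w => hammingWt w = k), (c w)^2 := by
    calc ∑ x : Fin n → Bool, f x * FF ck x
        = ∑ x : Fin n → Bool, FF c x * FF ck x :=
          Finset.sum_congr rfl fun x _ => by rw [hfF x]
      _ = 2^n * ∑ w, c w * ck w := plancherel c ck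
      _ = 2^n * ∑ w ∈ univ.filter (fun w => hammingWt w = k), (c w)^2 := by
          congr 1
          rw [Finset.sum_filter]
          refine Finset.sum_congr rfl fun w _ => ?_
          rw [hck]
          by_cases h : hammingWt w = k <;> simp [h, sq]
  -- weight identity
  have hwt : ∑ w : Fin n → Bool, ((2*m-1:ℕ):ℝ)^(hammingWt w) * (ck w)^2
      = ((2*m-1:ℕ):ℝ)^k * ∑ w ∈ univ.filter (fun w => hammingWt w = k), (c w)^2 := by
    rw [Finset.mul_sum, Finset.sum_filter]
    refine Finset.sum_congr rfl fun w _ => ?_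
    rw [hck]
    by_cases h : hammingWt w = k <;> simp [h]
  have hkey : (∑ x : Fin n → Bool, (FF ck x)^(2*m)) / 2^n
      ≤ (((2*m-1:ℕ):ℝ)^k * ∑ w ∈ univ.filter (fun w => hammingWt w = k), (c w)^2)^m := by
    rw [← hwt]; exact key m hm n ck
  -- Hölder exponents
  have hm' : (0:ℝ) < m := by exact_mod_cast hm
  have hm1 : (1:ℝ) ≤ m := by exact_mod_cast hm
  have h2m1 : (0:ℝ) < 2*(m:ℝ)-1 := by linarith
  have h2m : (0:ℝ) < 2*(m:ℝ) := by linarith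
  have hconj : Real.HolderConjugate ((2*m:ℝ)/(2*m-1)) (2*m:ℝ) := by
    rw [Real.holderConjugate_iff]
    constructor
    · rw [lt_div_iff₀ h2m1]; linarith
    · rw [inv_div, inv_eq_one_div, ← add_div, div_eq_one_iff_eq h2m.ne']
      ring
  have holder := Real.inner_le_Lp_mul_Lq_of_nonneg (univ : Finset (Fin n → Bool))
    (f := fun x => if x ∈ A then (1:ℝ) else 0) (g := fun x => |FF ck x|) hconj
    (fun i _ => by split <;> norm_num) (fun i _ => abs_nonneg _)
  have hPne : ((2*m:ℝ)/(2*m-1)) ≠ 0 := by positivity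
  have hind : ∑ x : Fin n → Bool, (if x ∈ A then (1:ℝ) else 0) ^ ((2*m:ℝ)/(2*m-1)) = A.card := by
    rw [Finset.sum_congr rfl (fun x _ => show (if x ∈ A then (1:ℝ) else 0) ^ ((2*m:ℝ)/(2*m-1))
        = if x ∈ A then (1:ℝ) else 0 from by
      by_cases h : x ∈ A <;> simp [h, Real.one_rpow, Real.zero_rpow hPne])]
    rw [Finset.sum_ite_mem, Finset.univ_inter, Finset.sum_const, nsmul_eq_mul, mul_one]
  have habs : ∑ x : Fin n → Bool, |FF ck x| ^ (2*m:ℝ) = ∑ x : Fin n → Bool, (FF ck x)^(2*m) := by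
    refine Finset.sum_congr rfl fun x _ => ?_
    rw [show ((2*(m:ℝ))) = ((2*m : ℕ) : ℝ) from by push_cast; ring]
    rw [Real.rpow_natCast, ← abs_pow, abs_of_nonneg ?_]
    rw [show 2*m = m*2 from by ring, pow_mul]
    positivity
  rw [hind, habs] at holder
  -- bound on the pure-power sum
  have hsum0 : (0:ℝ) ≤ ∑ x : Fin n → Bool, (FF ck x)^(2*m) :=
    Finset.sum_nonneg fun x _ => by
      rw [show 2*m = m*2 from by ring, pow_mul]; positivity
  have h1 : (∑ x : Fin n → Bool, (FF ck x)^(2*m))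
      ≤ 2^n * (((2*m-1:ℕ):ℝ)^k * ∑ w ∈ univ.filter (fun w => hammingWt w = k), (c w)^2)^m := by
    rw [div_le_iff₀ h2n] at hkey; linarith
  have hstep : (∑ x : Fin n → Bool, (FF ck x)^(2*m)) ^ ((1:ℝ)/(2*m))
      ≤ ((2:ℝ)^n)^((1:ℝ)/(2*m))
        * (((2*m-1:ℕ):ℝ)^k * ∑ w ∈ univ.filter (fun w => hammingWt w = k), (c w)^2)^((1:ℝ)/2) := by
    have hq0 : (0:ℝ) ≤ (1:ℝ)/(2*m) := by positivity
    have hbase0 : (0:ℝ) ≤ ((2*m-1:ℕ):ℝ)^k * ∑ w ∈ univ.filter (fun w => hammingWt w = k), (c w)^2 :=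
      mul_nonneg hρk0 hW0
    calc (∑ x : Fin n → Bool, (FF ck x)^(2*m)) ^ ((1:ℝ)/(2*m))
        ≤ (2^n * (((2*m-1:ℕ):ℝ)^k * ∑ w ∈ univ.filter (fun w => hammingWt w = k), (c w)^2)^m)
            ^ ((1:ℝ)/(2*m)) := Real.rpow_le_rpow hsum0 h1 hq0
      _ = ((2:ℝ)^n)^((1:ℝ)/(2*m))
            * (((2*m-1:ℕ):ℝ)^k * ∑ w ∈ univ.filter (fun w => hammingWt w = k), (c w)^2)^((1:ℝ)/2) := by
          rw [Real.mul_rpow h2n.le (pow_nonneg hbase0 m),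
            ← Real.rpow_natCast (((2*m-1:ℕ):ℝ)^k * ∑ w ∈ univ.filter (fun w => hammingWt w = k), (c w)^2) m,
            ← Real.rpow_mul hbase0]
          congr 2
          rw [mul_one_div, div_eq_div_iff (by positivity) (by norm_num : (2:ℝ) ≠ 0)]
          ring
  -- main chain
  have hfabs : ∑ x : Fin n → Bool, f x * FF ck x ≤ ∑ x : Fin n → Bool, f x * |FF ck x| :=
    Finset.sum_le_sum fun x _ => mul_le_mul_of_nonneg_left (le_abs_self _) (hf0 x)
  have heq : ∑ x : Fin n → Bool, f x * |FF ck x|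
      = (2^n/(A.card:ℝ)) * ∑ x : Fin n → Bool, (if x ∈ A then (1:ℝ) else 0) * |FF ck x| := by
    rw [Finset.mul_sum]
    refine Finset.sum_congr rfl fun x _ => ?_
    rw [hfdef]
    dsimp only
    rw [div_div_eq_mul_div, div_mul_eq_mul_div]
    ring_nf
  have hchain : (2:ℝ)^n * ∑ w ∈ univ.filter (fun w => hammingWt w = k), (c w)^2
      ≤ (2^n/(A.card:ℝ)) * ((A.card:ℝ) ^ ((1:ℝ) - (1:ℝ)/(2*m))
        * (((2:ℝ)^n)^((1:ℝ)/(2*m))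
          * (((2*m-1:ℕ):ℝ)^k * ∑ w ∈ univ.filter (fun w => hammingWt w = k), (c w)^2)^((1:ℝ)/2))) := by
    have hPinv : 1/((2*m:ℝ)/(2*m-1)) = (1:ℝ) - (1:ℝ)/(2*m) := by
      rw [one_div_div]
      field_simp
    have hQinv : 1/(2*m:ℝ) = (1:ℝ)/(2*m) := rfl
    rw [← hplan]
    refine le_trans hfabs ?_
    rw [heq]
    refine le_trans (mul_le_mul_of_nonneg_left holder (by positivity)) ?_
    rw [hPinv]
    have hcd : (0:ℝ) ≤ (A.card:ℝ) ^ ((1:ℝ) - (1:ℝ)/(2*m)) := Real.rpow_nonneg hcard.le _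
    exact mul_le_mul_of_nonneg_left (mul_le_mul_of_nonneg_left hstep hcd) (by positivity)
  -- simplify the constant
  have hconst : (2^n/(A.card:ℝ)) * (A.card:ℝ) ^ ((1:ℝ) - (1:ℝ)/(2*m)) * ((2:ℝ)^n)^((1:ℝ)/(2*m))
      = 2^n * ((2^n : ℝ)/A.card) ^ ((1:ℝ)/(2*m)) := const_simp _ _ _ h2n hcard
  have hWle : (∑ w ∈ univ.filter (fun w => hammingWt w = k), (c w)^2)
      ≤ ((2^n : ℝ)/A.card) ^ ((1:ℝ)/(2*m))
        * (((2*m-1:ℕ):ℝ)^k * ∑ w ∈ univ.filter (fun w => hammingWt w = k), (c w)^2)^((1:ℝ)/2) := by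
    have h2 := hchain
    have e : (2:ℝ)^n/(A.card:ℝ) * ((A.card:ℝ) ^ ((1:ℝ) - (1:ℝ)/(2*m))
        * (((2:ℝ)^n)^((1:ℝ)/(2*m))
          * (((2*m-1:ℕ):ℝ)^k * ∑ w ∈ univ.filter (fun w => hammingWt w = k), (c w)^2)^((1:ℝ)/2)))
      = ((2^n/(A.card:ℝ)) * (A.card:ℝ) ^ ((1:ℝ) - (1:ℝ)/(2*m)) * ((2:ℝ)^n)^((1:ℝ)/(2*m)))
          * (((2*m-1:ℕ):ℝ)^k * ∑ w ∈ univ.filter (fun w => hammingWt w = k), (c w)^2)^((1:ℝ)/2) := by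
      ring
    rw [e, hconst, mul_assoc] at h2
    exact le_of_mul_le_mul_left h2 h2n
  -- sqrt trick
  have hfin := sqrt_trick _ (((2^n : ℝ)/A.card) ^ ((1:ℝ)/(2*m))) (((2*m-1:ℕ):ℝ)^k)
    hW0 (Real.rpow_nonneg (by positivity) _) hρk0 hWle
  calc ∑ w ∈ univ.filter (fun w => hammingWt w = k), (c w)^2
      ≤ (((2^n : ℝ)/A.card) ^ ((1:ℝ)/(2*m)))^2 * ((2*m-1:ℕ):ℝ)^k := hfin
    _ = ((2^n : ℝ)/A.card) ^ ((1:ℝ)/m) * ((2*m-1:ℕ):ℝ)^k := by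
        rw [rpow_sq _ _ (by positivity)]
        congr 2
        field_simp


end LK

theorem level_k_weight_bound :
    ∃ C : ℝ, 0 < C ∧ ∀ (n : ℕ) (A : Finset (Fin n → Bool)), A.Nonempty → ∀ k : ℕ, 1 ≤ k →
      ∑ w ∈ univ.filter (fun w => hammingWt w = k),
          boolFourier (fun x => (if x ∈ A then (1 : ℝ) else 0) / ((A.card : ℝ) / 2 ^ n)) w ^ 2
        ≤ (C * max 1 (2 * Real.log (1 / ((A.card : ℝ) / 2 ^ n)) / k)) ^ k := by
  refine ⟨2 * Real.exp 1, by positivity, ?_⟩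
  intro n A hA k hk
  have hcard : (0:ℝ) < A.card := by exact_mod_cast Finset.card_pos.mpr hA
  have h2n : (0:ℝ) < (2:ℝ)^n := by positivity
  have hk' : (0:ℝ) < k := by exact_mod_cast hk
  have hcle : (A.card:ℝ) ≤ 2^n := by
    have h1 : A.card ≤ Fintype.card (Fin n → Bool) := Finset.card_le_univ A
    have h2 : Fintype.card (Fin n → Bool) = 2^n := by simp [Fintype.card_fun]
    calc (A.card:ℝ) ≤ (Fintype.card (Fin n → Bool) : ℝ) := by exact_mod_cast h1
      _ = 2^n := by rw [h2]; push_cast; ring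
  have hratio : (1:ℝ) ≤ 2^n / A.card := (one_le_div hcard).mpr hcle
  have hLdef : Real.log (1 / ((A.card : ℝ) / 2 ^ n)) = Real.log ((2:ℝ)^n / A.card) := by
    rw [one_div_div]
  have hL0 : 0 ≤ Real.log ((2:ℝ)^n / A.card) := Real.log_nonneg hratio
  set L : ℝ := Real.log ((2:ℝ)^n / A.card) with hL
  have hexpL : Real.exp L = 2^n / A.card := Real.exp_log (by positivity)
  have hM1 : (1:ℝ) ≤ max 1 (2 * Real.log (1 / ((A.card : ℝ) / 2 ^ n)) / k) := le_max_left _ _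
  set M : ℝ := max 1 (2 * Real.log (1 / ((A.card : ℝ) / 2 ^ n)) / k) with hM
  have hCM : Real.exp 1 ≤ 2 * Real.exp 1 * M := by
    nlinarith [Real.exp_pos 1]
  by_cases hcase : L ≤ k
  · -- m = 1
    have h := LK.master n k 1 le_rfl A hA
    norm_num at h
    calc ∑ w ∈ univ.filter (fun w => hammingWt w = k),
            boolFourier (fun x => (if x ∈ A then (1 : ℝ) else 0) / ((A.card : ℝ) / 2 ^ n)) w ^ 2
        ≤ (2^n : ℝ)/A.card := h
      _ = Real.exp L := hexpL.symm
      _ ≤ Real.exp k := Real.exp_le_exp.mpr hcase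
      _ = (Real.exp 1)^k := by rw [← Real.exp_nat_mul, mul_one]
      _ ≤ (2 * Real.exp 1 * M)^k := pow_le_pow_left₀ (Real.exp_pos 1).le hCM k
  · push_neg at hcase
    have hLk : (1:ℝ) < L / k := (one_lt_div hk').mpr hcase
    set m : ℕ := ⌈L / k⌉₊ with hm
    have hm1 : 1 ≤ m := Nat.one_le_ceil_iff.mpr (by linarith)
    have hmR : (0:ℝ) < m := by exact_mod_cast hm1
    have h := LK.master n k m hm1 A hA
    have hLm : L * ((1:ℝ)/m) ≤ k := by
      have h1 : L / k ≤ m := Nat.le_ceil _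
      rw [div_le_iff₀ hk'] at h1
      rw [mul_one_div, div_le_iff₀ hmR]
      linarith
    have hrpow : ((2^n : ℝ)/A.card) ^ ((1:ℝ)/m) ≤ (Real.exp 1)^k := by
      rw [Real.rpow_def_of_pos (by positivity), ← hL]
      calc Real.exp (L * (1/(m:ℝ))) ≤ Real.exp k := Real.exp_le_exp.mpr hLm
        _ = (Real.exp 1)^k := by rw [← Real.exp_nat_mul, mul_one]
    have hmlt : (m:ℝ) < L/k + 1 := Nat.ceil_lt_add_one (by positivity)
    have hMval : 2 * L / k ≤ M := by
      rw [hM, hLdef]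
      exact le_max_right _ _
    have hρle : ((2*m-1 : ℕ) : ℝ) ≤ 2 * M := by
      have h1 : ((2*m-1 : ℕ) : ℝ) ≤ 2*(m:ℝ) := by
        have : (2*m-1 : ℕ) ≤ 2*m := by omega
        calc ((2*m-1 : ℕ) : ℝ) ≤ ((2*m : ℕ) : ℝ) := by exact_mod_cast this
          _ = 2*(m:ℝ) := by push_cast; ring
      have h2 : 2*(m:ℝ) ≤ 2*(L/k) + 2 := by linarith
      have h3 : 2*(L/k) + 2 ≤ 2*(2*L/k) := by
        have : 2*L/k = 2*(L/k) := by ring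
        rw [this]
        linarith
      calc ((2*m-1 : ℕ) : ℝ) ≤ 2*(L/k) + 2 := by linarith
        _ ≤ 2*(2*L/k) := h3
        _ ≤ 2*M := by linarith
    calc ∑ w ∈ univ.filter (fun w => hammingWt w = k),
            boolFourier (fun x => (if x ∈ A then (1 : ℝ) else 0) / ((A.card : ℝ) / 2 ^ n)) w ^ 2
        ≤ ((2^n : ℝ)/A.card) ^ ((1:ℝ)/m) * ((2*m-1 : ℕ) : ℝ)^k := h
      _ ≤ (Real.exp 1)^k * (2*M)^k := by
          refine mul_le_mul hrpow (pow_le_pow_left₀ (Nat.cast_nonneg _) hρle k) (by positivity) (by positivity)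
      _ = (2 * Real.exp 1 * M)^k := by rw [← mul_pow]; ring_nf
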